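/- For p₀ ∈ (0,1) and α > -1, with x* = p₀^{1/(1+α)}/(p₀^{1/(1+α)} + (1-p₀)^{1/(1+α)}), one has α h(x*) - D(x*‖p₀) = (1+α) log(p₀^{1/(1+α)} + (1-p₀)^{1/(1+α)}). -/

import Mathlib

/-- Binary Shannon entropy (natural logarithm). -/
noncomputable def binEnt (x : ℝ) : ℝ := -x * Real.log x - (1 - x) * Real.log (1 - x)

/-- Binary relative entropy D(x‖p). -/
noncomputable def binKL (x p : ℝ) : ℝ :=
  x * Real.log (x / p) + (1 - x) * Real.log ((1 - x) / (1 - p))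

/-- Evaluation of the sCGF: α h(x*) - D(x*‖p₀) = (1+α) log(p₀^{1/(1+α)} + (1-p₀)^{1/(1+α)}). -/
theorem sCGF_evaluation (p₀ α : ℝ) (hp : p₀ ∈ Set.Ioo (0 : ℝ) 1) (hα : -1 < α) (xs : ℝ)
    (hxs : xs = p₀ ^ (1 / (1 + α)) / (p₀ ^ (1 / (1 + α)) + (1 - p₀) ^ (1 / (1 + α)))) :
    α * binEnt xs - binKL xs p₀ =
      (1 + α) * Real.log (p₀ ^ (1 / (1 + α)) + (1 - p₀) ^ (1 / (1 + α))) := by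
  obtain ⟨hp0, hp1⟩ := hp
  have hq0 : (0:ℝ) < 1 - p₀ := by linarith
  have hα0 : (0:ℝ) < 1 + α := by linarith
  set a := p₀ ^ (1 / (1 + α)) with ha
  set b := (1 - p₀) ^ (1 / (1 + α)) with hb
  have ha0 : 0 < a := Real.rpow_pos_of_pos hp0 _
  have hb0 : 0 < b := Real.rpow_pos_of_pos hq0 _
  have hs0 : 0 < a + b := by linarith
  have hxs1 : 1 - xs = b / (a + b) := by
    rw [hxs]; field_simp; ring
  have hloga : Real.log a = (1 / (1 + α)) * Real.log p₀ := Real.log_rpow hp0 _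
  have hlogb : Real.log b = (1 / (1 + α)) * Real.log (1 - p₀) := Real.log_rpow hq0 _
  have hlx : Real.log xs = (1 / (1 + α)) * Real.log p₀ - Real.log (a + b) := by
    rw [hxs, Real.log_div ha0.ne' hs0.ne', hloga]
  have hlx1 : Real.log (1 - xs) = (1 / (1 + α)) * Real.log (1 - p₀) - Real.log (a + b) := by
    rw [hxs1, Real.log_div hb0.ne' hs0.ne', hlogb]
  have hlxp : Real.log (xs / p₀) = Real.log xs - Real.log p₀ := by
    have hxs0 : 0 < xs := by rw [hxs]; positivity
    exact Real.log_div hxs0.ne' hp0.ne'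
  have hlx1p : Real.log ((1 - xs) / (1 - p₀)) = Real.log (1 - xs) - Real.log (1 - p₀) := by
    have hxs0 : 0 < 1 - xs := by rw [hxs1]; positivity
    exact Real.log_div hxs0.ne' hq0.ne'
  have hsum : xs + (1 - xs) = 1 := by ring
  unfold binEnt binKL
  rw [hlxp, hlx1p, hlx, hlx1]
  have hd : (1 / (1 + α)) * (1 + α) = 1 := by field_simp
  field_simp
  ring
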